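/- Let F be a commutative ring, let G be a finite group whose commutator subgroup is contained in its center Z = Z(G), and let Σ_Z denote the element ∑_{z ∈ Z} z of the group algebra F[G]. Then for every x ∈ F[G], the element x · Σ_Z lies in the center of F[G]; that is, the left ideal F[G] · Σ_Z is contained in the center of F[G]. -/

import Mathlib

/-- A ring `R` is *centrally essential* if for every nonzero `r ∈ R` there is a central
element `c` such that `c * r` is a nonzero central element. -/
def IsCentrallyEssential (R : Type*) [Ring R] : Prop :=
  ∀ r : R, r ≠ 0 → ∃ c ∈ Subring.center R, c * r ≠ 0 ∧ c * r ∈ Subring.center R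

theorem mul_sum_center_mem_center
    (F : Type*) [CommRing F] (G : Type*) [Group G] [Fintype G] [DecidableEq G]
    (hG : commutator G ≤ Subgroup.center G) (x : MonoidAlgebra F G) :
    x * (∑ z : Subgroup.center G, MonoidAlgebra.of F G (z : G)) ∈
      Subring.center (MonoidAlgebra F G) := by
  set S : MonoidAlgebra F G := ∑ z : Subgroup.center G, MonoidAlgebra.of F G (z : G) with hS
  -- S commutes with every of g
  have hcomm : ∀ g : G, MonoidAlgebra.of F G g * S = S * MonoidAlgebra.of F G g := by
    intro g
    rw [hS, Finset.mul_sum, Finset.sum_mul]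
    refine Finset.sum_congr rfl fun z _ => ?_
    rw [← map_mul, ← map_mul, (Subgroup.mem_center_iff.mp z.2 g)]
  -- multiplication by a central group element absorbs into S
  have habs : ∀ z : Subgroup.center G, MonoidAlgebra.of F G (z : G) * S = S := by
    intro z
    rw [hS, Finset.mul_sum]
    have := Fintype.sum_equiv (Equiv.mulLeft z)
      (fun w : Subgroup.center G => MonoidAlgebra.of F G ((z * w : Subgroup.center G) : G))
      (fun w : Subgroup.center G => MonoidAlgebra.of F G (w : G)) (fun w => rfl)
    simpa [map_mul] using this
  have key : ∀ g h : G,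
      MonoidAlgebra.of F G h * (MonoidAlgebra.of F G g * S)
        = (MonoidAlgebra.of F G g * S) * MonoidAlgebra.of F G h := by
    intro g h
    have hc : h⁻¹ * g⁻¹ * h * g ∈ Subgroup.center G := by
      apply hG
      open scoped commutatorElement in
      have : ⁅h⁻¹, g⁻¹⁆ ∈ commutator G := Subgroup.commutator_mem_commutator (Subgroup.mem_top _) (Subgroup.mem_top _)
      simpa [commutatorElement_def, mul_assoc] using this
    have hgh : h * g = g * h * (h⁻¹ * g⁻¹ * h * g) := by group
    calc MonoidAlgebra.of F G h * (MonoidAlgebra.of F G g * S)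
        = MonoidAlgebra.of F G (h * g) * S := by rw [← mul_assoc, ← map_mul]
      _ = MonoidAlgebra.of F G (g * h) * (MonoidAlgebra.of F G (⟨h⁻¹ * g⁻¹ * h * g, hc⟩ : Subgroup.center G) * S) := by
          rw [hgh, map_mul, mul_assoc]
      _ = MonoidAlgebra.of F G (g * h) * S := by rw [habs ⟨_, hc⟩]
      _ = MonoidAlgebra.of F G g * S * MonoidAlgebra.of F G h := by
          rw [map_mul, mul_assoc, hcomm h, ← mul_assoc]
  -- reduce to basis elements
  induction x using MonoidAlgebra.induction_on with
  | of g =>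
      rw [Subring.mem_center_iff]
      intro y
      induction y using MonoidAlgebra.induction_on with
      | of h => exact key g h
      | add a b ha hb => rw [add_mul, mul_add, ha, hb]
      | smul r f hf => rw [smul_mul_assoc, hf, mul_smul_comm]
  | add a b ha hb =>
      rw [add_mul]; exact Subring.add_mem _ ha hb
  | smul r f hf =>
      rw [Subring.mem_center_iff] at hf ⊢
      intro y
      rw [smul_mul_assoc, mul_smul_comm, hf y, smul_mul_assoc]
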